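/- arXiv:2510.08489 — 3 statements merged into one kernel-verified Lean document; each statement's English description precedes it below -/
import Mathlib

section
/- The function c*(b1) = r1*r2*((s2/b1 + s3*σ)*(p + b1*s1)/(t - b1*s1) + s2/b1 + s3*σ*g) attains a local minimum on (0, t/s1) at b* = (-s1*s2 + sqrt(s1^2*s2^2 + s1*s2*s3*σ*t)) / (s1*s3*σ). -/
set_option maxHeartbeats 800000


theorem cstar_local_min
    (r1 r2 s1 s2 s3 σ g t p : ℝ)
    (hr1 : 0 < r1) (hr2 : 0 < r2) (hs1 : 0 < s1) (hs2 : 0 < s2)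
    (hs3 : 0 < s3) (hσ : 0 < σ) (hg : 0 < g) (ht : 0 < t) (hp : 0 < p)
    (hbt : s1 * ((-(s1 * s2) + Real.sqrt (s1 ^ 2 * s2 ^ 2 + s1 * s2 * s3 * σ * t))
        / (s1 * s3 * σ)) < t) :
    IsLocalMinOn
      (fun b1 => r1 * r2 * ((s2 / b1 + s3 * σ) * (p + b1 * s1) / (t - b1 * s1)
        + s2 / b1 + s3 * σ * g))
      (Set.Ioo 0 (t / s1))
      ((-(s1 * s2) + Real.sqrt (s1 ^ 2 * s2 ^ 2 + s1 * s2 * s3 * σ * t)) / (s1 * s3 * σ)) := by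
  set Dd : ℝ := s1 ^ 2 * s2 ^ 2 + s1 * s2 * s3 * σ * t with hDd
  have hDdpos : 0 < Dd := by positivity
  set rt : ℝ := Real.sqrt Dd with hrt
  have hrt2 : rt ^ 2 = Dd := Real.sq_sqrt hDdpos.le
  have hrgt : s1 * s2 < rt := by
    have hlt : (s1 * s2) ^ 2 < Dd := by
      rw [hDd]
      nlinarith [mul_pos (mul_pos (mul_pos (mul_pos hs1 hs2) hs3) hσ) ht]
    rw [hrt]
    rw [show s1 * s2 = Real.sqrt ((s1 * s2) ^ 2) from (Real.sqrt_sq (by positivity)).symm]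
    exact Real.sqrt_lt_sqrt (by positivity) hlt
  have hden : 0 < s1 * s3 * σ := by positivity
  set a : ℝ := (-(s1 * s2) + rt) / (s1 * s3 * σ) with ha
  have ha0 : 0 < a := div_pos (by linarith) hden
  have hat : s1 * a < t := hbt
  have key : s1 * (s3 * σ) * a ^ 2 + 2 * (s1 * s2) * a - s2 * t = 0 := by
    rw [ha]
    field_simp
    nlinarith [hrt2]
  have hta : 0 < t - s1 * a := by linarith
  have hmin : ∀ x ∈ Set.Ioo (0:ℝ) (t / s1),
      r1 * r2 * ((s2 / a + s3 * σ) * (p + a * s1) / (t - a * s1)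
        + s2 / a + s3 * σ * g)
      ≤ r1 * r2 * ((s2 / x + s3 * σ) * (p + x * s1) / (t - x * s1)
        + s2 / x + s3 * σ * g) := by
    intro x hx
    have hx0 : 0 < x := hx.1
    have hxt : s1 * x < t := by
      have := hx.2
      rw [lt_div_iff₀ hs1] at this
      linarith
    have htx : 0 < t - s1 * x := by linarith
    have expand : ∀ y : ℝ, 0 < y → 0 < t - s1 * y →
        (s2 / y + s3 * σ) * (p + y * s1) / (t - y * s1) + s2 / y + s3 * σ * g
        = (s3 * σ * s1 * y ^ 2 + s3 * σ * p * y + s2 * (p + t)) / (y * (t - s1 * y))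
          + s3 * σ * g := by
      intro y hy hty
      have h1 : t - y * s1 ≠ 0 := by nlinarith
      have h2 : y ≠ 0 := ne_of_gt hy
      field_simp
      ring
    rw [expand a ha0 hta, expand x hx0 htx]
    have hDa : 0 < a * (t - s1 * a) := by positivity
    have hDx : 0 < x * (t - s1 * x) := by positivity
    have hdiv : (s3 * σ * s1 * a ^ 2 + s3 * σ * p * a + s2 * (p + t)) / (a * (t - s1 * a))
        ≤ (s3 * σ * s1 * x ^ 2 + s3 * σ * p * x + s2 * (p + t)) / (x * (t - s1 * x)) := by
      rw [div_le_div_iff₀ hDa hDx]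
      have hΔ : (s3 * σ * s1 * x ^ 2 + s3 * σ * p * x + s2 * (p + t)) * (a * (t - s1 * a))
          - (s3 * σ * s1 * a ^ 2 + s3 * σ * p * a + s2 * (p + t)) * (x * (t - s1 * x))
          = s1 * (s3 * σ * a * (t + p) + s2 * (p + t)) * (x - a) ^ 2 := by
        linear_combination (x - a) * (p + t) * key
      have hnn : 0 ≤ s1 * (s3 * σ * a * (t + p) + s2 * (p + t)) * (x - a) ^ 2 := by positivity
      linarith [hΔ, hnn]
    have := mul_le_mul_of_nonneg_left (add_le_add_right hdiv (s3 * σ * g)) (by positivity : (0:ℝ) ≤ r1 * r2)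
    linarith
  filter_upwards [self_mem_nhdsWithin] with x hx using hmin x hx
end

section
/- The optimal batch size function b1*(σ) = (-s1*s2 + sqrt(s1^2*s2^2 + s1*s2*s3*σ*t)) / (s1*s3*σ) is antitone (monotonically non-increasing) in σ on (0, ∞): if 0 < σ1 ≤ σ2 then b1*(σ2) ≤ b1*(σ1). -/
theorem b1_star_antitone
    (s1 s2 s3 t : ℝ)
    (hs1 : 0 < s1) (hs2 : 0 < s2) (hs3 : 0 < s3) (ht : 0 < t)
    (σ1 σ2 : ℝ) (hσ1 : 0 < σ1) (hle : σ1 ≤ σ2) :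
    (-(s1 * s2) + Real.sqrt (s1 ^ 2 * s2 ^ 2 + s1 * s2 * s3 * σ2 * t)) / (s1 * s3 * σ2)
      ≤ (-(s1 * s2) + Real.sqrt (s1 ^ 2 * s2 ^ 2 + s1 * s2 * s3 * σ1 * t)) / (s1 * s3 * σ1) := by
  have hσ2 : 0 < σ2 := lt_of_lt_of_le hσ1 hle
  have key : ∀ σ : ℝ, 0 < σ →
      (-(s1 * s2) + Real.sqrt (s1 ^ 2 * s2 ^ 2 + s1 * s2 * s3 * σ * t)) / (s1 * s3 * σ)
        = (s2 * t) / (s1 * s2 + Real.sqrt (s1 ^ 2 * s2 ^ 2 + s1 * s2 * s3 * σ * t)) := by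
    intro σ hσ
    set r := Real.sqrt (s1 ^ 2 * s2 ^ 2 + s1 * s2 * s3 * σ * t) with hr
    have harg : (0:ℝ) ≤ s1 ^ 2 * s2 ^ 2 + s1 * s2 * s3 * σ * t := by positivity
    have hr2 : r ^ 2 = s1 ^ 2 * s2 ^ 2 + s1 * s2 * s3 * σ * t := Real.sq_sqrt harg
    have hrpos : 0 < s1 * s2 + r := by
      have : 0 ≤ r := Real.sqrt_nonneg _
      nlinarith
    rw [div_eq_div_iff (by positivity) hrpos.ne']
    nlinarith [hr2]
  rw [key σ1 hσ1, key σ2 hσ2]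
  have hmono : Real.sqrt (s1 ^ 2 * s2 ^ 2 + s1 * s2 * s3 * σ1 * t)
      ≤ Real.sqrt (s1 ^ 2 * s2 ^ 2 + s1 * s2 * s3 * σ2 * t) := by
    apply Real.sqrt_le_sqrt; nlinarith [mul_le_mul_of_nonneg_left hle (by positivity : (0:ℝ) ≤ s1 * s2 * s3 * t)]
  have h1 : 0 < s1 * s2 + Real.sqrt (s1 ^ 2 * s2 ^ 2 + s1 * s2 * s3 * σ1 * t) := by
    have := Real.sqrt_nonneg (s1 ^ 2 * s2 ^ 2 + s1 * s2 * s3 * σ1 * t); nlinarith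
  apply div_le_div_of_nonneg_left (by positivity) h1
  linarith
end

section
/- If α > 1 and e ≥ σ ≥ e/α with σ, e > 0, then b1*(σ) ≤ α * b1*(e), where b1*(x) = (-s1*s2 + sqrt(s1^2*s2^2 + s1*s2*s3*x*t)) / (s1*s3*x). -/
theorem b1_star_alpha_bound
    (s1 s2 s3 t α e σ : ℝ)
    (hs1 : 0 < s1) (hs2 : 0 < s2) (hs3 : 0 < s3) (ht : 0 < t)
    (hα : 1 < α) (he : 0 < e) (hσ : 0 < σ)
    (h1 : σ ≤ e) (h2 : e / α ≤ σ) :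
    (-(s1 * s2) + Real.sqrt (s1 ^ 2 * s2 ^ 2 + s1 * s2 * s3 * σ * t)) / (s1 * s3 * σ)
      ≤ α * ((-(s1 * s2) + Real.sqrt (s1 ^ 2 * s2 ^ 2 + s1 * s2 * s3 * e * t)) / (s1 * s3 * e)) := by
  have hα0 : (0:ℝ) < α := lt_trans zero_lt_one hα
  have heα : e ≤ α * σ := by
    rw [div_le_iff₀ hα0] at h2; linarith [h2]
  set Sσ := Real.sqrt (s1 ^ 2 * s2 ^ 2 + s1 * s2 * s3 * σ * t) with hSσdef
  set Se := Real.sqrt (s1 ^ 2 * s2 ^ 2 + s1 * s2 * s3 * e * t) with hSedef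
  have hSσsq : Sσ ^ 2 = s1 ^ 2 * s2 ^ 2 + s1 * s2 * s3 * σ * t :=
    Real.sq_sqrt (by positivity)
  have hSesq : Se ^ 2 = s1 ^ 2 * s2 ^ 2 + s1 * s2 * s3 * e * t :=
    Real.sq_sqrt (by positivity)
  have hSσ0 : 0 ≤ Sσ := Real.sqrt_nonneg _
  have hSe0 : 0 ≤ Se := Real.sqrt_nonneg _
  clear_value Sσ Se
  have hkey : Se ≤ α * Sσ := by
    have h3 : s1 ^ 2 * s2 ^ 2 + s1 * s2 * s3 * e * t
        ≤ α ^ 2 * (s1 ^ 2 * s2 ^ 2 + s1 * s2 * s3 * σ * t) := by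
      have hB : (0:ℝ) < s1 * s2 * s3 * t := by positivity
      have hαsq : α ≤ α ^ 2 := by nlinarith
      have p1 : α * (s1 * s2 * s3 * t * σ) ≤ α ^ 2 * (s1 * s2 * s3 * t * σ) :=
        mul_le_mul_of_nonneg_right hαsq (by positivity)
      have p2 : s1 ^ 2 * s2 ^ 2 ≤ α ^ 2 * (s1 ^ 2 * s2 ^ 2) :=
        le_mul_of_one_le_left (by positivity) (by nlinarith)
      have p3 : s1 * s2 * s3 * t * e ≤ α * (s1 * s2 * s3 * t * σ) :=
        mul_le_mul_of_nonneg_left heα hB.le |>.trans_eq (by ring)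
      nlinarith [p1, p2, p3]
    calc Se ≤ Real.sqrt (α ^ 2 * (s1 ^ 2 * s2 ^ 2 + s1 * s2 * s3 * σ * t)) :=
          hSedef ▸ Real.sqrt_le_sqrt h3
      _ = α * Sσ := by
          rw [hSσdef, Real.sqrt_mul (by positivity), Real.sqrt_sq hα0.le]
  have hσden : (0:ℝ) < Sσ + s1 * s2 := by nlinarith [mul_pos hs1 hs2]
  have heden : (0:ℝ) < Se + s1 * s2 := by nlinarith [mul_pos hs1 hs2]
  have hLσ : -(s1 * s2) + Sσ = s1 * s2 * s3 * t * σ / (Sσ + s1 * s2) := by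
    rw [eq_div_iff (ne_of_gt hσden)]; linear_combination hSσsq
  have hLe : -(s1 * s2) + Se = s1 * s2 * s3 * t * e / (Se + s1 * s2) := by
    rw [eq_div_iff (ne_of_gt heden)]; linear_combination hSesq
  rw [hLσ, hLe, div_div, div_div, mul_div_assoc',
    div_le_div_iff₀ (by positivity) (by positivity)]
  have hfac : Se + s1 * s2 ≤ α * (Sσ + s1 * s2) := by
    have : s1 * s2 ≤ α * (s1 * s2) := le_mul_of_one_le_left (by positivity) hα.le
    linarith [hkey, this]
  have hK : (0:ℝ) ≤ s1 * s2 * s3 * t * σ * (s1 * s3 * e) := by positivity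
  have hfin := mul_le_mul_of_nonneg_left hfac hK
  nlinarith [hfin]
end
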